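/- Let G be a matching covered bipartite graph with bipartition (A, B), at least 4 vertices, and minimum degree at least 3. If X is a minimum P-set of G, then every edge of the induced subgraph G[X] is removable in G. -/

import Mathlib

open SimpleGraph

universe u

/-- A graph has a perfect matching. -/
def HasPM {V : Type u} (G : SimpleGraph V) : Prop :=
  ∃ M : G.Subgraph, M.IsPerfectMatching

/-- A connected graph with at least two vertices in which every edge
lies in a perfect matching. -/
def MatchingCovered {V : Type u} (G : SimpleGraph V) : Prop :=
  G.Connected ∧ 2 ≤ Nat.card V ∧
    ∀ e ∈ G.edgeSet, ∃ M : G.Subgraph, M.IsPerfectMatching ∧ e ∈ M.edgeSet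

/-- Number of odd connected components. -/
noncomputable def oddComps {V : Type u} (G : SimpleGraph V) : ℕ :=
  Nat.card {c : G.ConnectedComponent // Odd (Nat.card c.supp)}

/-- An edge is removable if its deletion leaves a matching covered graph. -/
def Removable {V : Type u} (G : SimpleGraph V) (e : Sym2 V) : Prop :=
  e ∈ G.edgeSet ∧ MatchingCovered (G.deleteEdges {e})

/-- Removable, with absent edges counted as removable. -/
def RemovableExt {V : Type u} (G : SimpleGraph V) (e : Sym2 V) : Prop :=
  e ∉ G.edgeSet ∨ Removable G e

/-- Degree of a vertex. -/
noncomputable def degN {V : Type u} (G : SimpleGraph V) (v : V) : ℕ :=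
  Nat.card (G.neighborSet v)

/-- A graph on at least four vertices is bicritical if deleting any two
distinct vertices leaves a graph with a perfect matching. -/
def Bicritical {V : Type u} (G : SimpleGraph V) : Prop :=
  4 ≤ Nat.card V ∧ ∀ u v : V, u ≠ v → HasPM (G.induce ({u, v}ᶜ : Set V))

/-- A barrier: nonempty set `B` with `o(G - B) = |B|`. -/
def IsBarrier {V : Type u} (G : SimpleGraph V) (B : Set V) : Prop :=
  B.Nonempty ∧ oddComps (G.induce (Bᶜ : Set V)) = B.ncard

/-- 2-connectedness. -/
def TwoConnected {V : Type u} (G : SimpleGraph V) : Prop :=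
  3 ≤ Nat.card V ∧ ∀ s : Set V, s.ncard ≤ 1 → (G.induce (sᶜ : Set V)).Connected

/-- 3-connectedness. -/
def ThreeConnected {V : Type u} (G : SimpleGraph V) : Prop :=
  4 ≤ Nat.card V ∧ ∀ s : Set V, s.ncard ≤ 2 → (G.induce (sᶜ : Set V)).Connected

/-- A brick is a 3-connected bicritical graph. -/
def IsBrick {V : Type u} (G : SimpleGraph V) : Prop :=
  ThreeConnected G ∧ Bicritical G

/-- Map a vertex to the vertex set of the contraction `G/X`. -/
noncomputable def toContract {V : Type u} (X : Set V) (v : V) : ↥(Xᶜ) ⊕ Unit := by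
  classical exact if h : v ∈ X then Sum.inr () else Sum.inl ⟨v, h⟩

/-- Contraction `G/X` of the set `X` to a single vertex. -/
noncomputable def contract {V : Type u} (G : SimpleGraph V) (X : Set V) :
    SimpleGraph (↥(Xᶜ) ⊕ Unit) :=
  SimpleGraph.fromRel (fun a b =>
    ∃ x y, G.Adj x y ∧ a = toContract X x ∧ b = toContract X y)

/-- The edge cut `∂(X)`. -/
def cutEdges {V : Type u} (G : SimpleGraph V) (X : Set V) : Set (Sym2 V) :=
  {e | e ∈ G.edgeSet ∧ ∃ x y, e = s(x, y) ∧ x ∈ X ∧ y ∉ X}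

/-- A tight cut: every perfect matching meets it in exactly one edge. -/
def IsTightCut {V : Type u} (G : SimpleGraph V) (X : Set V) : Prop :=
  ∀ M : G.Subgraph, M.IsPerfectMatching → (cutEdges G X ∩ M.edgeSet).ncard = 1

/-- A separating cut: both contractions are matching covered. -/
def IsSeparatingCut {V : Type u} (G : SimpleGraph V) (X : Set V) : Prop :=
  MatchingCovered (contract G X) ∧ MatchingCovered (contract G Xᶜ)

/-- `(A, B)` is a bipartition of `G`. -/
def IsBipartition {V : Type u} (G : SimpleGraph V) (A B : Set V) : Prop :=
  A ∪ B = Set.univ ∧ A ∩ B = ∅ ∧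
    ∀ u v : V, G.Adj u v → (u ∈ A ∧ v ∈ B) ∨ (u ∈ B ∧ v ∈ A)

/-- A P-set of a bipartite matching covered graph with bipartition `(A, B)`. -/
def IsPSet {V : Type u} (G : SimpleGraph V) (A B X : Set V) : Prop :=
  (X ∩ A).ncard = (X ∩ B).ncard ∧
    ((∃! p : V × V, p.1 ∈ X ∩ A ∧ p.2 ∈ B \ X ∧ G.Adj p.1 p.2) ∨
     (∃! p : V × V, p.1 ∈ A \ X ∧ p.2 ∈ X ∩ B ∧ G.Adj p.1 p.2))


section RemovableProof

variable {V : Type u} [Finite V] {G : SimpleGraph V} {A B : Set V}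
set_option linter.unusedSectionVars false

lemma bip_notAB (hbip : IsBipartition G A B) {a : V} (h1 : a ∈ A) (h2 : a ∈ B) : False := by
  have : a ∈ A ∩ B := ⟨h1, h2⟩
  rw [hbip.2.1] at this
  exact this

lemma bip_sideA (hbip : IsBipartition G A B) {a b : V} (hab : G.Adj a b) (hb : b ∈ B) :
    a ∈ A := by
  rcases hbip.2.2 a b hab with ⟨h1, _⟩ | ⟨h1, h2⟩
  · exact h1
  · exact absurd h2 (fun h => bip_notAB hbip h hb)

lemma bip_sideB (hbip : IsBipartition G A B) {a b : V} (hab : G.Adj a b) (ha : a ∈ A) :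
    b ∈ B := by
  rcases hbip.2.2 a b hab with ⟨_, h2⟩ | ⟨h1, _⟩
  · exact h2
  · exact absurd ha (fun h => bip_notAB hbip h h1)

lemma exists_partner (M : G.Subgraph) (hM : M.IsPerfectMatching) :
    ∃ σ : V → V, (∀ z, M.Adj z (σ z)) ∧ (∀ z w, M.Adj z w → w = σ z) := by
  choose σ h1 h2 using fun z => hM.1 (hM.2 z)
  exact ⟨σ, h1, h2⟩

lemma partner_invol {M : G.Subgraph} {σ : V → V}
    (h1 : ∀ z, M.Adj z (σ z)) (h2 : ∀ z w, M.Adj z w → w = σ z) (z : V) :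
    σ (σ z) = z :=
  (h2 (σ z) z (h1 z).symm).symm

/-- The key counting identity for a perfect matching and a bipartition. -/
lemma count_F1 (hbip : IsBipartition G A B) {σ : V → V}
    (hσG : ∀ z, G.Adj z (σ z)) (hσσ : ∀ z, σ (σ z) = z) (Z : Set V) :
    (Z ∩ A).ncard + {b ∈ Z ∩ B | σ b ∉ Z}.ncard
      = (Z ∩ B).ncard + {a ∈ Z ∩ A | σ a ∉ Z}.ncard := by
  classical
  have hinj : Function.Injective σ := by
    intro a b hab
    have := congrArg σ hab
    rwa [hσσ, hσσ] at this
  set SA0 : Set V := {a ∈ Z ∩ A | σ a ∈ Z} with hSA0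
  set SA1 : Set V := {a ∈ Z ∩ A | σ a ∉ Z} with hSA1
  set SB0 : Set V := {b ∈ Z ∩ B | σ b ∈ Z} with hSB0
  set SB1 : Set V := {b ∈ Z ∩ B | σ b ∉ Z} with hSB1
  have hA : (Z ∩ A).ncard = SA0.ncard + SA1.ncard := by
    rw [← Set.ncard_union_eq (by
      rw [Set.disjoint_left]; rintro a ⟨_, ha⟩ ⟨_, ha'⟩; exact ha' ha)
      (Set.toFinite _) (Set.toFinite _)]
    congr 1
    ext a; by_cases h : σ a ∈ Z <;> simp [hSA0, hSA1, h]
  have hB : (Z ∩ B).ncard = SB0.ncard + SB1.ncard := by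
    rw [← Set.ncard_union_eq (by
      rw [Set.disjoint_left]; rintro a ⟨_, ha⟩ ⟨_, ha'⟩; exact ha' ha)
      (Set.toFinite _) (Set.toFinite _)]
    congr 1
    ext a; by_cases h : σ a ∈ Z <;> simp [hSB0, hSB1, h]
  have himg : SB0 = σ '' SA0 := by
    ext b
    constructor
    · rintro ⟨⟨hbZ, hbB⟩, hb2⟩
      refine ⟨σ b, ⟨⟨hb2, bip_sideA hbip (hσG b).symm hbB⟩, ?_⟩, hσσ b⟩
      rw [hσσ]; exact hbZ
    · rintro ⟨a, ⟨⟨haZ, haA⟩, ha2⟩, rfl⟩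
      exact ⟨⟨ha2, bip_sideB hbip (hσG a) haA⟩, by rw [hσσ]; exact haZ⟩
  have hcard0 : SB0.ncard = SA0.ncard := by
    rw [himg, Set.ncard_image_of_injOn (hinj.injOn)]
  rw [hA, hB, hcard0]
  omega

lemma forced_edge_contra (hG : MatchingCovered G) {c d : V}
    (hdeg : 3 ≤ degN G c)
    (hall : ∀ M : G.Subgraph, M.IsPerfectMatching → M.Adj c d) : False := by
  have hdeg' : 3 ≤ (G.neighborSet c).ncard := by
    unfold degN at hdeg
    rwa [Nat.card_coe_set_eq] at hdeg
  have h1 : ¬ G.neighborSet c ⊆ {d} := by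
    intro hsub
    have := Set.ncard_le_ncard hsub (Set.finite_singleton d)
    rw [Set.ncard_singleton] at this
    omega
  obtain ⟨d₂, hd₂mem, hd₂ne⟩ := Set.not_subset.mp h1
  obtain ⟨M, hM, hMe⟩ := hG.2.2 s(c, d₂) ((G.mem_edgeSet).mpr hd₂mem)
  have hMcd₂ : M.Adj c d₂ := (SimpleGraph.Subgraph.mem_edgeSet).mp hMe
  have hMcd : M.Adj c d := hall M hM
  obtain ⟨w, _, huniq⟩ := hM.1 (hM.2 c)
  exact hd₂ne (by rw [huniq d₂ hMcd₂, huniq d hMcd]; rfl)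

/-- A balanced set with no entering edges is trivial. -/
lemma trivial_cut (hG : MatchingCovered G) (hbip : IsBipartition G A B) (Z : Set V)
    (hbal : (Z ∩ A).ncard = (Z ∩ B).ncard)
    (hno : ∀ a b, G.Adj a b → b ∈ Z → b ∈ B → a ∉ Z → False) :
    Z = ∅ ∨ Z = Set.univ := by
  classical
  have hleave : ∀ a b, G.Adj a b → a ∈ Z → a ∈ A → b ∉ Z → False := by
    intro a b hab haZ haA hbZ
    obtain ⟨M, hM, hMe⟩ := hG.2.2 s(a, b) ((G.mem_edgeSet).mpr hab)
    have hMab : M.Adj a b := (SimpleGraph.Subgraph.mem_edgeSet).mp hMe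
    obtain ⟨σ, h1, h2⟩ := exists_partner M hM
    have hσσ := partner_invol h1 h2
    have hσG : ∀ z, G.Adj z (σ z) := fun z => M.adj_sub (h1 z)
    have hF1 := count_F1 hbip hσG hσσ Z
    have hin : {b' ∈ Z ∩ B | σ b' ∉ Z} = ∅ := by
      ext b'
      simp only [Set.mem_setOf_eq, Set.mem_empty_iff_false, iff_false, not_and]
      rintro ⟨hb'Z, hb'B⟩ hb'σ
      exact hno (σ b') b' (hσG b').symm hb'Z hb'B hb'σ
    rw [hin, Set.ncard_empty] at hF1
    have hout : {a' ∈ Z ∩ A | σ a' ∉ Z}.ncard = 0 := by omega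
    have haout : a ∈ {a' ∈ Z ∩ A | σ a' ∉ Z} := by
      refine ⟨⟨haZ, haA⟩, ?_⟩
      rw [← h2 a b hMab]; exact hbZ
    rw [Set.ncard_eq_zero (Set.toFinite _)] at hout
    rw [hout] at haout
    exact haout
  have hclose : ∀ z w, G.Adj z w → z ∈ Z → w ∈ Z := by
    intro z w hzw hz
    have hz' : z ∈ A ∪ B := by rw [hbip.1]; trivial
    rcases hz' with hzA | hzB
    · by_contra hw
      exact hleave z w hzw hz hzA hw
    · by_contra hw
      exact hno w z hzw.symm hz hzB hw
  by_cases hZ : Z = ∅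
  · exact Or.inl hZ
  · right
    obtain ⟨z0, hz0⟩ := Set.nonempty_iff_ne_empty.mpr hZ
    have key : ∀ {z w : V} (_ : G.Walk z w), z ∈ Z → w ∈ Z := by
      intro z w p
      induction p with
      | nil => exact id
      | cons h _ ih => exact fun hz => ih (hclose _ _ h hz)
    rw [Set.eq_univ_iff_forall]
    intro w
    obtain ⟨p⟩ := hG.1.preconnected z0 w
    exact key p hz0

lemma exists_pm_avoiding (hG : MatchingCovered G) {u v : V} (hf : G.Adj u v)
    (hdeg : 3 ≤ degN G u) :
    ∃ M : G.Subgraph, M.IsPerfectMatching ∧ ¬ M.Adj u v := by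
  have hdeg' : 3 ≤ (G.neighborSet u).ncard := by
    unfold degN at hdeg
    rwa [Nat.card_coe_set_eq] at hdeg
  have h1 : ¬ G.neighborSet u ⊆ {v} := by
    intro hsub
    have := Set.ncard_le_ncard hsub (Set.finite_singleton v)
    rw [Set.ncard_singleton] at this
    omega
  obtain ⟨b₂, hb₂mem, hb₂ne⟩ := Set.not_subset.mp h1
  obtain ⟨M, hM, hMe⟩ := hG.2.2 s(u, b₂) ((G.mem_edgeSet).mpr hb₂mem)
  have hMub₂ : M.Adj u b₂ := (SimpleGraph.Subgraph.mem_edgeSet).mp hMe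
  refine ⟨M, hM, fun hMuv => ?_⟩
  obtain ⟨w, _, huniq⟩ := hM.1 (hM.2 u)
  exact hb₂ne (by rw [huniq b₂ hMub₂, huniq v hMuv]; rfl)

lemma conn_del (hG : MatchingCovered G) (hbip : IsBipartition G A B)
    {u v : V} (hu : u ∈ A) (hv : v ∈ B) (hf : G.Adj u v) (hdeg : 3 ≤ degN G u) :
    (G.deleteEdges {s(u, v)}).Connected := by
  classical
  set Gf := G.deleteEdges {s(u, v)} with hGf
  obtain ⟨M₁, hM₁, hM₁e⟩ := hG.2.2 s(u, v) ((G.mem_edgeSet).mpr hf)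
  have hM₁uv : M₁.Adj u v := (SimpleGraph.Subgraph.mem_edgeSet).mp hM₁e
  obtain ⟨M₂, hM₂, hM₂uv⟩ := exists_pm_avoiding hG hf hdeg
  obtain ⟨σ₁, h₁1, h₁2⟩ := exists_partner M₁ hM₁
  obtain ⟨σ₂, h₂1, h₂2⟩ := exists_partner M₂ hM₂
  have hσσ₂ := partner_invol h₂1 h₂2
  have hGfadj : ∀ z w : V, G.Adj z w → ¬ (z = u ∧ w = v) → ¬ (z = v ∧ w = u) → Gf.Adj z w := by
    intro z w h hn1 hn2
    rw [hGf, SimpleGraph.deleteEdges_adj]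
    refine ⟨h, ?_⟩
    rw [Set.mem_singleton_iff, Sym2.eq_iff]
    tauto
  set R : Set V := {z | Gf.Reachable v z} with hR
  have hvR : v ∈ R := SimpleGraph.Reachable.refl v
  have hRclose : ∀ z w, z ∈ R → Gf.Adj z w → w ∈ R := by
    intro z w hzR hzw
    exact SimpleGraph.Reachable.trans hzR hzw.reachable
  have hUinR : u ∈ R := by
    by_contra huR
    have h2R : ∀ z, z ∈ R → σ₂ z ∈ R := by
      intro z hzR
      refine hRclose z (σ₂ z) hzR (hGfadj z (σ₂ z) (M₂.adj_sub (h₂1 z)) ?_ ?_)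
      · rintro ⟨rfl, h⟩; exact hM₂uv (h ▸ h₂1 z)
      · rintro ⟨rfl, h⟩; exact hM₂uv (h ▸ h₂1 z).symm
    have hbalR : (R ∩ A).ncard = (R ∩ B).ncard := by
      have := count_F1 hbip (fun z => M₂.adj_sub (h₂1 z)) hσσ₂ R
      have hin : {b ∈ R ∩ B | σ₂ b ∉ R} = ∅ := by
        ext b
        simp only [Set.mem_setOf_eq, Set.mem_empty_iff_false, iff_false, not_and]
        rintro ⟨hbZ, _⟩ h
        exact h (h2R b hbZ)
      have hout : {a ∈ R ∩ A | σ₂ a ∉ R} = ∅ := by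
        ext a
        simp only [Set.mem_setOf_eq, Set.mem_empty_iff_false, iff_false, not_and]
        rintro ⟨haZ, _⟩ h
        exact h (h2R a haZ)
      rw [hin, hout, Set.ncard_empty] at this
      omega
    have hmaps : ∀ a ∈ R ∩ A, σ₁ a ∈ (R ∩ B) \ {v} := by
      rintro a ⟨haR, haA⟩
      have hau : a ≠ u := fun h => huR (h ▸ haR)
      have hσ₁B : σ₁ a ∈ B := bip_sideB hbip (M₁.adj_sub (h₁1 a)) haA
      have hσ₁R : σ₁ a ∈ R := by
        refine hRclose a (σ₁ a) haR (hGfadj a (σ₁ a) (M₁.adj_sub (h₁1 a)) ?_ ?_)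
        · rintro ⟨rfl, _⟩; exact hau rfl
        · rintro ⟨rfl, _⟩; exact bip_notAB hbip haA hv
      refine ⟨⟨hσ₁R, hσ₁B⟩, ?_⟩
      rw [Set.mem_singleton_iff]
      intro hav
      have : a = u := by
        have h1 : M₁.Adj v a := hav ▸ (h₁1 a).symm
        have h2 : M₁.Adj v u := hM₁uv.symm
        rw [h₁2 v a h1, h₁2 v u h2]
      exact huR (this ▸ haR)
    have hinj : Set.InjOn σ₁ (R ∩ A) := by
      intro a _ b _ hab
      have := congrArg σ₁ hab
      rwa [partner_invol h₁1 h₁2, partner_invol h₁1 h₁2] at this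
    have hle : (R ∩ A).ncard ≤ ((R ∩ B) \ {v}).ncard :=
      Set.ncard_le_ncard_of_injOn σ₁ hmaps hinj (Set.toFinite _)
    have hvmem : v ∈ R ∩ B := ⟨hvR, hv⟩
    have hd : ((R ∩ B) \ {v}).ncard = (R ∩ B).ncard - 1 :=
      Set.ncard_diff_singleton_of_mem hvmem
    have hpos : 0 < (R ∩ B).ncard := (Set.ncard_pos (Set.toFinite _)).mpr ⟨v, hvmem⟩
    omega
  have hne : Nonempty V := hG.1.nonempty
  refine ⟨?_⟩
  intro z w
  obtain ⟨p⟩ := hG.1.preconnected z w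
  have key : ∀ {z w : V} (_ : G.Walk z w), Gf.Reachable z w := by
    intro z w p
    induction p with
    | nil => exact SimpleGraph.Reachable.refl _
    | @cons x y _ h _ ih =>
      refine SimpleGraph.Reachable.trans ?_ ih
      by_cases h1 : x = u ∧ y = v
      · exact h1.1 ▸ h1.2 ▸ hUinR.symm
      · by_cases h2 : x = v ∧ y = u
        · exact h2.1 ▸ h2.2 ▸ hUinR
        · exact (hGfadj x y h h1 h2).reachable
  exact key p

lemma ncard_A_eq_B (hG : MatchingCovered G) (hbip : IsBipartition G A B) :
    A.ncard = B.ncard := by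
  classical
  have hedge : ∃ e, e ∈ G.edgeSet := by
    have h2 : 1 < Nat.card V := lt_of_lt_of_le one_lt_two hG.2.1
    have : Nontrivial V := Finite.one_lt_card_iff_nontrivial.mp h2
    obtain ⟨z, w, hzw⟩ := exists_pair_ne V
    obtain ⟨p⟩ := hG.1.preconnected z w
    cases p with
    | nil => exact absurd rfl hzw
    | cons h _ => exact ⟨_, (G.mem_edgeSet).mpr h⟩
  obtain ⟨e, he⟩ := hedge
  obtain ⟨M, hM, _⟩ := hG.2.2 e he
  obtain ⟨σ, h1, h2⟩ := exists_partner M hM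
  have hσσ := partner_invol h1 h2
  have hinj : Function.Injective σ := by
    intro a b hab
    have := congrArg σ hab
    rwa [hσσ, hσσ] at this
  have himg : B = σ '' A := by
    ext b
    constructor
    · intro hb
      exact ⟨σ b, bip_sideA hbip (M.adj_sub (h1 b)).symm hb, hσσ b⟩
    · rintro ⟨a, ha, rfl⟩
      exact bip_sideB hbip (M.adj_sub (h1 a)) ha
  rw [himg, Set.ncard_image_of_injOn hinj.injOn]

lemma lemC (hG : MatchingCovered G) (hbip : IsBipartition G A B)
    {u v : V} (hu : u ∈ A) (hv : v ∈ B) (hf : G.Adj u v) (hdegu : 3 ≤ degN G u)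
    {x y : V} (hx : x ∈ A) (hy : y ∈ B) (hg : G.Adj x y) (hgf : s(x, y) ≠ s(u, v))
    (hforce : ∀ M : G.Subgraph, M.IsPerfectMatching → M.Adj x y → M.Adj u v) :
    ∃ W : Set V, (W ∩ A).ncard = (W ∩ B).ncard ∧ v ∈ W ∧ u ∉ W ∧
      ∀ a b, G.Adj a b → b ∈ W → b ∈ B → a ∉ W → a = u ∧ b = v := by
  classical
  have hAB : A.ncard = B.ncard := ncard_A_eq_B hG hbip
  obtain ⟨M₀, hM₀, hM₀g⟩ := hG.2.2 s(x, y) ((G.mem_edgeSet).mpr hg)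
  have hM₀xy : M₀.Adj x y := (SimpleGraph.Subgraph.mem_edgeSet).mp hM₀g
  have hM₀uv : M₀.Adj u v := hforce M₀ hM₀ hM₀xy
  obtain ⟨σ₀, h₀1, h₀2⟩ := exists_partner M₀ hM₀
  have hσσ₀ := partner_invol h₀1 h₀2
  have hxu : x ≠ u := by
    intro h
    subst h
    have e1 := h₀2 x y hM₀xy
    have e2 := h₀2 x v hM₀uv
    exact hgf (by rw [Sym2.eq_iff]; exact Or.inl ⟨rfl, e1.trans e2.symm⟩)
  have hyv : y ≠ v := by
    intro h
    have e1 := h₀2 y x hM₀xy.symm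
    have e2 := h₀2 v u hM₀uv.symm
    rw [h] at e1
    exact hxu (e1.trans e2.symm)
  obtain ⟨M₂, hM₂, hM₂uv⟩ := exists_pm_avoiding hG hf hdegu
  obtain ⟨σ₂, h₂1, h₂2⟩ := exists_partner M₂ hM₂
  have hσσ₂ := partner_invol h₂1 h₂2
  -- Hall setup
  let Bt := {b : V // b ∈ B ∧ b ≠ y}
  have := Fintype.ofFinite V
  let t : Bt → Finset V := fun b =>
    Finset.univ.filter (fun a => a ∈ A ∧ a ≠ x ∧ G.Adj a b.1 ∧ ¬(a = u ∧ b.1 = v))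
  have hmem_t : ∀ (b : Bt) (a : V),
      a ∈ t b ↔ a ∈ A ∧ a ≠ x ∧ G.Adj a b.1 ∧ ¬(a = u ∧ b.1 = v) := by
    intro b a
    simp [t]
  by_cases hall : ∀ s : Finset Bt, s.card ≤ (s.biUnion t).card
  · -- build a PM containing g avoiding f: contradiction
    exfalso
    obtain ⟨F, hFinj, hFt⟩ := (Finset.all_card_le_biUnion_card_iff_exists_injective t).mp hall
    have hFA : ∀ b : Bt, F b ∈ A ∧ F b ≠ x ∧ G.Adj (F b) b.1 ∧ ¬(F b = u ∧ b.1 = v) :=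
      fun b => (hmem_t b (F b)).mp (hFt b)
    -- range F = A \ {x}
    have hrange : Set.range F = A \ {x} := by
      apply Set.eq_of_subset_of_ncard_le
      · rintro a ⟨b, rfl⟩
        exact ⟨(hFA b).1, (hFA b).2.1⟩
      · have h1 : (Set.range F).ncard = Nat.card Bt := by
          rw [← Nat.card_coe_set_eq]
          exact Nat.card_range_of_injective hFinj
        have h2 : Nat.card Bt = (B \ {y}).ncard := by
          rw [← Nat.card_coe_set_eq]
          apply Nat.card_congr
          apply Equiv.subtypeEquiv (Equiv.refl V)
          intro b
          simp [Set.mem_diff]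
        have h3 : (B \ {y}).ncard = B.ncard - 1 :=
          Set.ncard_diff_singleton_of_mem hy
        have h4 : (A \ {x}).ncard = A.ncard - 1 :=
          Set.ncard_diff_singleton_of_mem hx
        rw [h1, h2, h3, h4, hAB]
      · exact Set.toFinite _
    have hsurj : ∀ a, a ∈ A → a ≠ x → ∃ b : Bt, F b = a := by
      intro a ha hax
      have : a ∈ Set.range F := by rw [hrange]; exact ⟨ha, hax⟩
      exact this
    choose Finv hFinv using fun (a : V) (h : a ∈ A ∧ a ≠ x) => hsurj a h.1 h.2
    set π : V → V := fun z =>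
      if z = x then y
      else if z = y then x
      else if hz : z ∈ B ∧ z ≠ y then (F ⟨z, hz⟩ : V)
      else if hz : z ∈ A ∧ z ≠ x then ((Finv z hz : Bt) : V)
      else z
      with hπdef
    have hπx : π x = y := by simp [hπdef]
    have hyx : y ≠ x := fun h => bip_notAB hbip (h ▸ hx) hy
    have hπy : π y = x := by
      simp [hπdef, hyx]
    have hπB : ∀ (z) (hz : z ∈ B ∧ z ≠ y), π z = F ⟨z, hz⟩ := by
      intro z hz
      have hzx : z ≠ x := fun h => bip_notAB hbip (h ▸ hx) hz.1
      simp only [hπdef]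
      rw [if_neg hzx, if_neg hz.2, dif_pos hz]
    have hπA : ∀ (z) (hz : z ∈ A ∧ z ≠ x), π z = ((Finv z hz : Bt) : V) := by
      intro z hz
      have hzy : z ≠ y := fun h => bip_notAB hbip hz.1 (h ▸ hy)
      have hzB : ¬(z ∈ B ∧ z ≠ y) := fun h => bip_notAB hbip hz.1 h.1
      simp only [hπdef]
      rw [if_neg hz.2, if_neg hzy, dif_neg hzB, dif_pos hz]
    have hπ : ∀ z, π (π z) = z ∧ G.Adj z (π z) := by
      intro z
      by_cases hzx : z = x
      · subst hzx
        rw [hπx, hπy]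
        exact ⟨rfl, hg⟩
      · by_cases hzy : z = y
        · subst hzy
          rw [hπy, hπx]
          exact ⟨rfl, hg.symm⟩
        · have hz' : z ∈ A ∪ B := by rw [hbip.1]; trivial
          rcases hz' with hzA | hzB
          · -- z ∈ A \ {x}
            have hz : z ∈ A ∧ z ≠ x := ⟨hzA, hzx⟩
            rw [hπA z hz]
            set b : Bt := Finv z hz with hb
            have hFb : F b = z := hFinv z hz
            have hbB : (b : V) ∈ B ∧ (b : V) ≠ y := b.2
            constructor
            · rw [hπB _ hbB]
              have : (⟨(b : V), hbB⟩ : Bt) = b := Subtype.ext rfl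
              rw [this, hFb]
            · have := (hFA b).2.2.1
              rw [hFb] at this
              exact this
          · -- z ∈ B \ {y}
            have hz : z ∈ B ∧ z ≠ y := ⟨hzB, hzy⟩
            rw [hπB z hz]
            set a : V := F ⟨z, hz⟩ with ha
            have haA : a ∈ A ∧ a ≠ x := ⟨(hFA ⟨z, hz⟩).1, (hFA ⟨z, hz⟩).2.1⟩
            constructor
            · rw [hπA a haA]
              have : F (Finv a haA) = F ⟨z, hz⟩ := by rw [hFinv a haA]
              rw [hFinj this]
            · exact (hFA ⟨z, hz⟩).2.2.1.symm
    set Mw : G.Subgraph := {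
      verts := Set.univ
      Adj := fun z w => w = π z
      adj_sub := fun {z w} h => h ▸ (hπ z).2
      edge_vert := fun _ => trivial
      symm := ⟨fun z w h => by rw [h]; exact ((hπ z).1).symm⟩ }
    have hMwPM : Mw.IsPerfectMatching := by
      constructor
      · intro z _
        exact ⟨π z, rfl, fun w' h => h⟩
      · intro z
        trivial
    have hMwxy : Mw.Adj x y := hπx.symm
    have hMwuv : Mw.Adj u v := hforce Mw hMwPM hMwxy
    have : v = π u := hMwuv
    have huA : u ∈ A ∧ u ≠ x := ⟨hu, fun h => hxu h.symm⟩
    rw [hπA u huA] at this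
    set b : Bt := Finv u huA with hb
    have hFb : F b = u := hFinv u huA
    exact (hFA b).2.2.2 ⟨hFb, this.symm⟩
  · -- violator exists
    push_neg at hall
    obtain ⟨s, hs⟩ := hall
    set Tset : Set V := (fun (b : Bt) => (b : V)) '' ↑s with hTset
    have hTmem : ∀ b', b' ∈ Tset ↔ ∃ (h : b' ∈ B ∧ b' ≠ y), (⟨b', h⟩ : Bt) ∈ s := by
      intro b'
      constructor
      · rintro ⟨bb, hbb, rfl⟩
        exact ⟨bb.2, by rwa [Subtype.coe_eta]⟩
      · rintro ⟨h, hmem⟩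
        exact ⟨⟨b', h⟩, hmem, rfl⟩
    have hTB : ∀ b' ∈ Tset, b' ∈ B ∧ b' ≠ y := by
      intro b' hb'
      obtain ⟨h, _⟩ := (hTmem b').mp hb'
      exact h
    have hTcard : Tset.ncard = s.card := by
      rw [hTset, Set.ncard_image_of_injOn (Subtype.val_injective.injOn), Set.ncard_coe_finset]
    set Nset : Set V := {a | a ∈ A ∧ ∃ b ∈ Tset, G.Adj a b ∧ ¬(a = u ∧ b = v)} with hNset
    have hNx_eq : (↑(s.biUnion t) : Set V) = Nset \ {x} := by
      ext a
      simp only [Finset.coe_biUnion, Set.mem_iUnion, Finset.mem_coe, Set.mem_diff,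
        Set.mem_singleton_iff]
      constructor
      · rintro ⟨bb, hbb, hat⟩
        rw [hmem_t] at hat
        exact ⟨⟨hat.1, ⟨bb, (hTmem bb).mpr ⟨bb.2, by rwa [Subtype.coe_eta]⟩,
          hat.2.2.1, hat.2.2.2⟩⟩, hat.2.1⟩
      · rintro ⟨⟨haA, b', hb'T, hadj, hpair⟩, hax⟩
        obtain ⟨h, hmem⟩ := (hTmem b').mp hb'T
        exact ⟨⟨b', h⟩, hmem, (hmem_t _ _).mpr ⟨haA, hax, hadj, hpair⟩⟩
    have hNxcard : (Nset \ {x}).ncard < Tset.ncard := by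
      rw [← hNx_eq, Set.ncard_coe_finset, hTcard]
      exact hs
    have hTN : Tset.ncard ≤ Nset.ncard := by
      apply Set.ncard_le_ncard_of_injOn σ₂
      · intro b hb
        obtain ⟨hbB, _⟩ := hTB b hb
        refine ⟨bip_sideA hbip (M₂.adj_sub (h₂1 b)).symm hbB, b, hb,
          (M₂.adj_sub (h₂1 b)).symm, ?_⟩
        rintro ⟨h1', rfl⟩
        exact hM₂uv (h1' ▸ (h₂1 b).symm)
      · intro a _ b _ hab
        have := congrArg σ₂ hab
        rwa [hσσ₂, hσσ₂] at this
    have hvT : v ∈ Tset := by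
      by_contra hvT
      have : Tset.ncard ≤ (Nset \ {x}).ncard := by
        apply Set.ncard_le_ncard_of_injOn σ₀
        · intro b hb
          obtain ⟨hbB, hby⟩ := hTB b hb
          have hσ₀A : σ₀ b ∈ A := bip_sideA hbip (M₀.adj_sub (h₀1 b)).symm hbB
          refine ⟨⟨hσ₀A, b, hb, (M₀.adj_sub (h₀1 b)).symm, ?_⟩, ?_⟩
          · rintro ⟨_, rfl⟩
            exact hvT hb
          · rw [Set.mem_singleton_iff]
            intro hσ₀x
            apply hby
            have e1 : y = σ₀ x := h₀2 x y hM₀xy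
            have : σ₀ (σ₀ b) = σ₀ x := by rw [hσ₀x]
            rw [hσσ₀] at this
            rw [this, ← e1]
        · intro a _ b _ hab
          have := congrArg σ₀ hab
          rwa [hσσ₀, hσσ₀] at this
      omega
    have hxN : x ∈ Nset := by
      by_contra hxN
      have : Nset \ {x} = Nset := by
        apply Set.diff_singleton_eq_self hxN
      rw [this] at hNxcard
      omega
    have hbalW : Nset.ncard = Tset.ncard := by
      have h1 : (Nset \ {x}).ncard = Nset.ncard - 1 :=
        Set.ncard_diff_singleton_of_mem hxN
      have h2 : 0 < Nset.ncard := (Set.ncard_pos (Set.toFinite _)).mpr ⟨x, hxN⟩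
      omega
    set W : Set V := Tset ∪ Nset with hW
    have hWA : W ∩ A = Nset := by
      ext a
      constructor
      · rintro ⟨haW | haW, haA⟩
        · exact absurd haA (fun h => bip_notAB hbip h (hTB a haW).1)
        · exact haW
      · intro ha
        exact ⟨Or.inr ha, ha.1⟩
    have hWB : W ∩ B = Tset := by
      ext b
      constructor
      · rintro ⟨hbW | hbW, hbB⟩
        · exact hbW
        · exact absurd hbB (fun h => bip_notAB hbip hbW.1 h)
      · intro hb
        exact ⟨Or.inl hb, (hTB b hb).1⟩
    by_cases huN : u ∈ Nset
    · exfalso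
      have := trivial_cut hG hbip W (by rw [hWA, hWB]; exact hbalW) ?_
      · rcases this with h | h
        · have : v ∈ W := Or.inl hvT
          rw [h] at this
          exact this
        · have : y ∈ W := by rw [h]; trivial
          rcases this with hyW | hyW
          · exact (hTB y hyW).2 rfl
          · exact bip_notAB hbip hyW.1 hy
      · intro a b hab hbW hbB haW
        have hbT : b ∈ Tset := by rw [← hWB]; exact ⟨hbW, hbB⟩
        by_cases hpair : a = u ∧ b = v
        · exact haW (hpair.1 ▸ Or.inr huN)
        · exact haW (Or.inr ⟨bip_sideA hbip hab hbB, b, hbT, hab, hpair⟩)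
    · refine ⟨W, by rw [hWA, hWB]; exact hbalW, Or.inl hvT, ?_, ?_⟩
      · intro huW
        rcases huW with h | h
        · exact bip_notAB hbip hu (hTB u h).1
        · exact huN h
      · intro a b hab hbW hbB haW
        have hbT : b ∈ Tset := by rw [← hWB]; exact ⟨hbW, hbB⟩
        by_cases hpair : a = u ∧ b = v
        · exact hpair
        · exact absurd (Or.inr ⟨bip_sideA hbip hab hbB, b, hbT, hab, hpair⟩ : a ∈ W) haW

lemma coreL2 (hG : MatchingCovered G) (hbip : IsBipartition G A B)
    (hdeg : ∀ z : V, 3 ≤ degN G z)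
    (X : Set V) (hbalX : (X ∩ A).ncard = (X ∩ B).ncard)
    (hmin : ∀ Y : Set V, IsPSet G A B Y → X.ncard ≤ Y.ncard)
    {x0 y0 : V} (hx0A : x0 ∈ A) (hx0X : x0 ∉ X) (hy0X : y0 ∈ X) (hy0B : y0 ∈ B)
    (he0 : G.Adj x0 y0)
    (hXcl : ∀ a b, G.Adj a b → b ∈ X → b ∈ B → a ∉ X → a = x0 ∧ b = y0)
    {u v : V} (huA : u ∈ A) (hvB : v ∈ B) (huX : u ∈ X) (hvX : v ∈ X) (hf : G.Adj u v)
    (W : Set V) (hbalW : (W ∩ A).ncard = (W ∩ B).ncard) (hvW : v ∈ W) (huW : u ∉ W)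
    (hWcl : ∀ a b, G.Adj a b → b ∈ W → b ∈ B → a ∉ W → a = u ∧ b = v) :
    False := by
  classical
  set P : Set V := X ∩ W with hP
  set U : Set V := X ∪ W with hU
  have hmodA : (U ∩ A).ncard + (P ∩ A).ncard = (X ∩ A).ncard + (W ∩ A).ncard := by
    have h := Set.ncard_union_add_ncard_inter (X ∩ A) (W ∩ A) (Set.toFinite _) (Set.toFinite _)
    have e1 : (X ∩ A) ∪ (W ∩ A) = U ∩ A := by
      ext z
      simp only [hU, Set.mem_union, Set.mem_inter_iff]
      tauto
    have e2 : (X ∩ A) ∩ (W ∩ A) = P ∩ A := by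
      ext z
      simp only [hP, Set.mem_inter_iff]
      tauto
    rw [e1, e2] at h
    exact h
  have hmodB : (U ∩ B).ncard + (P ∩ B).ncard = (X ∩ B).ncard + (W ∩ B).ncard := by
    have h := Set.ncard_union_add_ncard_inter (X ∩ B) (W ∩ B) (Set.toFinite _) (Set.toFinite _)
    have e1 : (X ∩ B) ∪ (W ∩ B) = U ∩ B := by
      ext z
      simp only [hU, Set.mem_union, Set.mem_inter_iff]
      tauto
    have e2 : (X ∩ B) ∩ (W ∩ B) = P ∩ B := by
      ext z
      simp only [hP, Set.mem_inter_iff]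
      tauto
    rw [e1, e2] at h
    exact h
  have hvP : v ∈ P := ⟨hvX, hvW⟩
  have hux0 : u ≠ x0 := fun h => hx0X (h ▸ huX)
  have hPcl : ∀ a b, G.Adj a b → b ∈ P → b ∈ B → a ∉ P →
      (a = u ∧ b = v) ∨ (a = x0 ∧ b = y0 ∧ y0 ∈ W) := by
    intro a b hab hbP hbB haP
    by_cases haX : a ∈ X
    · have haW : a ∉ W := fun h => haP ⟨haX, h⟩
      exact Or.inl (hWcl a b hab hbP.2 hbB haW)
    · obtain ⟨h1, h2⟩ := hXcl a b hab hbP.1 hbB haX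
      exact Or.inr ⟨h1, h2, h2 ▸ hbP.2⟩
  have hUcl : ∀ a b, G.Adj a b → b ∈ U → b ∈ B → a ∉ U →
      a = x0 ∧ b = y0 ∧ x0 ∉ W := by
    intro a b hab hbU hbB haU
    have haX : a ∉ X := fun h => haU (Or.inl h)
    have haW : a ∉ W := fun h => haU (Or.inr h)
    rcases hbU with hbX | hbW
    · obtain ⟨h1, h2⟩ := hXcl a b hab hbX hbB haX
      exact ⟨h1, h2, h1 ▸ haW⟩
    · obtain ⟨h1, _⟩ := hWcl a b hab hbW hbB haW
      exact absurd (Or.inl (h1 ▸ huX)) haU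
  obtain ⟨Ms, hMs, _⟩ := hG.2.2 s(u, v) ((G.mem_edgeSet).mpr hf)
  obtain ⟨σs, hσs1, hσs2⟩ := exists_partner Ms hMs
  have hσσs := partner_invol hσs1 hσs2
  have hσsG : ∀ z, G.Adj z (σs z) := fun z => Ms.adj_sub (hσs1 z)
  by_cases hy0W : y0 ∈ W
  · -- Case 1
    have hx0W : x0 ∈ W := by
      by_contra hx0W
      exact hux0 ((hWcl x0 y0 he0 hy0W hy0B hx0W).1).symm
    have hUcl' : ∀ a b, G.Adj a b → b ∈ U → b ∈ B → a ∉ U → False := by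
      intro a b hab hbU hbB haU
      obtain ⟨h1, _, h3⟩ := hUcl a b hab hbU hbB haU
      exact h3 hx0W
    have hinU_empty : ∀ {σ : V → V}, (∀ z, G.Adj z (σ z)) →
        {b ∈ U ∩ B | σ b ∉ U} = ∅ := by
      intro σ hσG
      ext b
      simp only [Set.mem_setOf_eq, Set.mem_empty_iff_false, iff_false, not_and]
      rintro ⟨hbU, hbB⟩ hσb
      exact hUcl' (σ b) b (hσG b).symm hbU hbB hσb
    have hF1Us := count_F1 hbip hσsG hσσs U
    rw [hinU_empty hσsG, Set.ncard_empty] at hF1Us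
    -- hF1Us : (U∩A).ncard + 0 = (U∩B).ncard + out
    have h3cases : (U ∩ A).ncard = (U ∩ B).ncard ∨ (U ∩ A).ncard = (U ∩ B).ncard + 1 ∨
        (U ∩ B).ncard + 2 ≤ (U ∩ A).ncard := by omega
    rcases h3cases with hc | hc | hc
    · -- 1a
      rcases trivial_cut hG hbip U hc hUcl' with h | h
      · exact (h ▸ (Or.inl huX : u ∈ U) : u ∈ (∅ : Set V))
      · have hWcX : Wᶜ ⊆ X := by
          intro z hz
          have : z ∈ U := by rw [h]; trivial
          rcases this with h' | h'
          · exact h'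
          · exact absurd h' hz
        have hAB : A.ncard = B.ncard := ncard_A_eq_B hG hbip
        have hbalWc : (Wᶜ ∩ A).ncard = (Wᶜ ∩ B).ncard := by
          have e1 : Wᶜ ∩ A = A \ (W ∩ A) := by
            ext z; simp only [Set.mem_inter_iff, Set.mem_compl_iff, Set.mem_diff]; tauto
          have e2 : Wᶜ ∩ B = B \ (W ∩ B) := by
            ext z; simp only [Set.mem_inter_iff, Set.mem_compl_iff, Set.mem_diff]; tauto
          have d1 := Set.ncard_diff (Set.inter_subset_right : W ∩ A ⊆ A) (Set.toFinite _)
          have d2 := Set.ncard_diff (Set.inter_subset_right : W ∩ B ⊆ B) (Set.toFinite _)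
          rw [e1, e2, d1, d2, hAB, hbalW]
        have hpset : IsPSet G A B Wᶜ := by
          refine ⟨hbalWc, Or.inl ⟨(u, v), ⟨⟨huW, huA⟩, ⟨hvB, by simp [hvW]⟩, hf⟩, ?_⟩⟩
          rintro ⟨a, b⟩ ⟨⟨haW, haA⟩, ⟨hbB, hbW⟩, hab⟩
          simp only [Set.mem_compl_iff, not_not] at hbW
          obtain ⟨h1, h2⟩ := hWcl a b hab hbW hbB haW
          simp [h1, h2]
        have heq := Set.eq_of_subset_of_ncard_le hWcX (hmin Wᶜ hpset) (Set.toFinite _)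
        have : v ∈ Wᶜ := heq.symm ▸ hvX
        exact this hvW
    · -- 1b
      have hpb : (P ∩ B).ncard = (P ∩ A).ncard + 1 := by omega
      set Z : Set V := insert u P with hZ
      have hZX : Z ⊆ X := by
        rintro z (rfl | hz)
        · exact huX
        · exact hz.1
      have hZA : Z ∩ A = insert u (P ∩ A) := by
        ext z
        simp only [hZ, Set.mem_inter_iff, Set.mem_insert_iff]
        constructor
        · rintro ⟨rfl | hz, hzA⟩
          · exact Or.inl rfl
          · exact Or.inr ⟨hz, hzA⟩
        · rintro (rfl | ⟨hz, hzA⟩)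
          · exact ⟨Or.inl rfl, huA⟩
          · exact ⟨Or.inr hz, hzA⟩
      have hZB : Z ∩ B = P ∩ B := by
        ext z
        simp only [hZ, Set.mem_inter_iff, Set.mem_insert_iff]
        constructor
        · rintro ⟨rfl | hz, hzB⟩
          · exact absurd hzB (fun h => bip_notAB hbip huA h)
          · exact ⟨hz, hzB⟩
        · rintro ⟨hz, hzB⟩
          exact ⟨Or.inr hz, hzB⟩
      have hbalZ : (Z ∩ A).ncard = (Z ∩ B).ncard := by
        rw [hZA, hZB, Set.ncard_insert_of_notMem (fun h => huW h.1.2) (Set.toFinite _), hpb]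
      have hpsetZ : IsPSet G A B Z := by
        refine ⟨hbalZ, Or.inr ⟨(x0, y0), ⟨⟨hx0A, ?_⟩, ⟨Or.inr ⟨hy0X, hy0W⟩, hy0B⟩, he0⟩, ?_⟩⟩
        · rintro (rfl | hz)
          · exact hux0 rfl
          · exact hx0X hz.1
        · rintro ⟨a, b⟩ ⟨⟨haA, haZ⟩, ⟨hbZ, hbB⟩, hab⟩
          have haP : a ∉ P := fun h => haZ (Or.inr h)
          have hau : a ≠ u := fun h => haZ (Or.inl h)
          have hbP : b ∈ P := by
            rcases hbZ with rfl | h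
            · exact absurd hbB (fun h => bip_notAB hbip huA h)
            · exact h
          rcases hPcl a b hab hbP hbB haP with ⟨h1, _⟩ | ⟨h1, h2, _⟩
          · exact absurd h1 hau
          · simp [h1, h2]
      have heqZ := Set.eq_of_subset_of_ncard_le hZX (hmin Z hpsetZ) (Set.toFinite _)
      have hXBW : ∀ b, b ∈ X → b ∈ B → b ∈ W := by
        intro b hbX hbB
        have : b ∈ Z := heqZ.symm ▸ hbX
        rcases this with rfl | h
        · exact absurd hbB (fun h => bip_notAB hbip huA h)
        · exact h.2
      have hu_nb : ∀ b, G.Adj u b → b ∈ X → b ∈ B → b = v := by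
        intro b hub hbX hbB
        exact (hWcl u b hub (hXBW b hbX hbB) hbB huW).2
      set Z' : Set V := X \ {u, v} with hZ'
      have hZ'A : Z' ∩ A = (X ∩ A) \ {u} := by
        ext z
        simp only [hZ', Set.mem_inter_iff, Set.mem_diff, Set.mem_insert_iff,
          Set.mem_singleton_iff]
        constructor
        · rintro ⟨⟨hzX, hz2⟩, hzA⟩
          exact ⟨⟨hzX, hzA⟩, fun h => hz2 (Or.inl h)⟩
        · rintro ⟨⟨hzX, hzA⟩, hzu⟩
          refine ⟨⟨hzX, ?_⟩, hzA⟩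
          rintro (rfl | rfl)
          · exact hzu rfl
          · exact bip_notAB hbip hzA hvB
      have hZ'B : Z' ∩ B = (X ∩ B) \ {v} := by
        ext z
        simp only [hZ', Set.mem_inter_iff, Set.mem_diff, Set.mem_insert_iff,
          Set.mem_singleton_iff]
        constructor
        · rintro ⟨⟨hzX, hz2⟩, hzB⟩
          exact ⟨⟨hzX, hzB⟩, fun h => hz2 (Or.inr h)⟩
        · rintro ⟨⟨hzX, hzB⟩, hzv⟩
          refine ⟨⟨hzX, ?_⟩, hzB⟩
          rintro (rfl | rfl)
          · exact bip_notAB hbip huA hzB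
          · exact hzv rfl
      have hbalZ' : (Z' ∩ A).ncard = (Z' ∩ B).ncard := by
        rw [hZ'A, hZ'B,
          Set.ncard_diff_singleton_of_mem (show u ∈ X ∩ A from ⟨huX, huA⟩),
          Set.ncard_diff_singleton_of_mem (show v ∈ X ∩ B from ⟨hvX, hvB⟩),
          hbalX]
      have hZ'cl : ∀ a b, G.Adj a b → b ∈ Z' → b ∈ B → a ∉ Z' →
          (a = x0 ∧ b = y0) ∨ (a = u) := by
        intro a b hab hbZ' hbB haZ'
        have hbv : b ≠ v := fun h => hbZ'.2 (Or.inr h)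
        have haA : a ∈ A := bip_sideA hbip hab hbB
        by_cases haX : a ∈ X
        · have : a ∈ ({u, v} : Set V) := by
            by_contra h
            exact haZ' ⟨haX, h⟩
          rcases this with rfl | rfl
          · exact Or.inr rfl
          · exact absurd hvB (fun h => bip_notAB hbip haA h)
        · exact Or.inl (hXcl a b hab hbZ'.1 hbB haX)
      by_cases hvy0 : v = y0
      · -- 1b-ii : F4 on Z'
        have hnoZ' : ∀ a b, G.Adj a b → b ∈ Z' → b ∈ B → a ∉ Z' → False := by
          intro a b hab hbZ' hbB haZ'
          have hbv : b ≠ v := fun h => hbZ'.2 (Or.inr h)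
          rcases hZ'cl a b hab hbZ' hbB haZ' with ⟨_, h2⟩ | rfl
          · exact hbv (h2.trans hvy0.symm)
          · exact hbv (hu_nb b hab hbZ'.1 hbB)
        rcases trivial_cut hG hbip Z' hbalZ' hnoZ' with h | h
        · -- Z' = ∅ : X ⊆ {u,v}, degree of v ≤ 2
          have hXuv : ∀ z, z ∈ X → z = u ∨ z = v := by
            intro z hz
            by_contra hcon
            push_neg at hcon
            have : z ∈ Z' := ⟨hz, fun hh => by
              rcases hh with rfl | rfl
              · exact hcon.1 rfl
              · exact hcon.2 rfl⟩
            rw [h] at this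
            exact this
          have hnb : G.neighborSet v ⊆ {u, x0} := by
            intro w hw
            have hwv : G.Adj w v := hw.symm
            by_cases hwX : w ∈ X
            · rcases hXuv w hwX with rfl | rfl
              · exact Or.inl rfl
              · exact absurd hwv (G.loopless.irrefl _)
            · exact Or.inr ((hXcl w v hwv hvX hvB hwX).1)
          have hd := hdeg v
          unfold degN at hd
          rw [Nat.card_coe_set_eq] at hd
          have := Set.ncard_le_ncard hnb (Set.toFinite _)
          have h2 : ({u, x0} : Set V).ncard ≤ 2 := by
            apply le_trans (Set.ncard_insert_le u {x0})
            simp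
          omega
        · have : u ∈ Z' := by rw [h]; trivial
          exact this.2 (Or.inl rfl)
      · -- 1b-i : Z' is a smaller P-set
        have hpsetZ' : IsPSet G A B Z' := by
          refine ⟨hbalZ', Or.inr ⟨(x0, y0), ⟨⟨hx0A, fun h => hx0X h.1⟩,
            ⟨⟨hy0X, ?_⟩, hy0B⟩, he0⟩, ?_⟩⟩
          · rintro (rfl | rfl)
            · exact bip_notAB hbip huA hy0B
            · exact hvy0 rfl
          · rintro ⟨a, b⟩ ⟨⟨haA, haZ'⟩, ⟨hbZ', hbB⟩, hab⟩
            have hbv : b ≠ v := fun hh => hbZ'.2 (Or.inr hh)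
            rcases hZ'cl a b hab hbZ' hbB haZ' with ⟨h1, h2⟩ | rfl
            · simp [h1, h2]
            · exact absurd (hu_nb b hab hbZ'.1 hbB) hbv
        have hss : Z' ⊂ X := ⟨Set.diff_subset, fun hsub =>
          (hsub huX).2 (Or.inl rfl)⟩
        have := Set.ncard_lt_ncard hss (Set.toFinite _)
        have := hmin Z' hpsetZ'
        omega
    · -- 1c : every PM contains f
      apply forced_edge_contra hG (hdeg u) (d := v)
      intro M hM
      obtain ⟨σ, hσ1, hσ2⟩ := exists_partner M hM
      have hσσ := partner_invol hσ1 hσ2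
      have hσG : ∀ z, G.Adj z (σ z) := fun z => M.adj_sub (hσ1 z)
      have hF1U := count_F1 hbip hσG hσσ U
      rw [hinU_empty hσG, Set.ncard_empty] at hF1U
      have hF1P := count_F1 hbip hσG hσσ P
      have hpb2 : (P ∩ A).ncard + 2 ≤ (P ∩ B).ncard := by omega
      have hsub : {b ∈ P ∩ B | σ b ∉ P} ⊆ {v, y0} := by
        rintro b ⟨⟨hbP, hbB⟩, hbσ⟩
        rcases hPcl (σ b) b (hσG b).symm hbP hbB hbσ with ⟨_, h2⟩ | ⟨_, h2, _⟩
        · exact Or.inl h2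
        · exact Or.inr h2
      have hge2 : 2 ≤ {b ∈ P ∩ B | σ b ∉ P}.ncard := by omega
      have hvy0 : v ≠ y0 := by
        intro h
        have : ({v, y0} : Set V).ncard ≤ 1 := by
          rw [← h]
          simp
        have := Set.ncard_le_ncard hsub (Set.toFinite _)
        omega
      have hcard2 : ({v, y0} : Set V).ncard ≤ 2 := by
        apply le_trans (Set.ncard_insert_le v {y0})
        simp
      have heqset := Set.eq_of_subset_of_ncard_le hsub (by omega) (Set.toFinite _)
      have hvin : v ∈ {b ∈ P ∩ B | σ b ∉ P} := by
        rw [heqset]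
        exact Or.inl rfl
      obtain ⟨⟨hvP', _⟩, hvσ⟩ := hvin
      rcases hPcl (σ v) v (hσG v).symm hvP' hvB hvσ with ⟨h1, _⟩ | ⟨_, h2, _⟩
      · exact h1 ▸ (hσ1 v).symm
      · exact absurd h2 hvy0
  · -- Case 2 : y0 ∉ W
    have hPcl2 : ∀ a b, G.Adj a b → b ∈ P → b ∈ B → a ∉ P → a = u ∧ b = v := by
      intro a b hab hbP hbB haP
      rcases hPcl a b hab hbP hbB haP with h | ⟨_, _, h3⟩
      · exact h
      · exact absurd h3 hy0W
    have hinP_sub : ∀ {σ : V → V}, (∀ z, G.Adj z (σ z)) →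
        {b ∈ P ∩ B | σ b ∉ P} ⊆ {v} := by
      intro σ hσG
      rintro b ⟨⟨hbP, hbB⟩, hbσ⟩
      exact (hPcl2 (σ b) b (hσG b).symm hbP hbB hbσ).2
    have hinU_sub : ∀ {σ : V → V}, (∀ z, G.Adj z (σ z)) →
        {b ∈ U ∩ B | σ b ∉ U} ⊆ {y0} := by
      intro σ hσG
      rintro b ⟨⟨hbU, hbB⟩, hbσ⟩
      exact (hUcl (σ b) b (hσG b).symm hbU hbB hbσ).2.1
    have hF1Ps := count_F1 hbip hσsG hσσs P
    have hF1Us := count_F1 hbip hσsG hσσs U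
    have hb1 : {b ∈ P ∩ B | σs b ∉ P}.ncard ≤ 1 := by
      have := Set.ncard_le_ncard (hinP_sub hσsG) (Set.toFinite _)
      simpa using this
    have hb2 : {b ∈ U ∩ B | σs b ∉ U}.ncard ≤ 1 := by
      have := Set.ncard_le_ncard (hinU_sub hσsG) (Set.toFinite _)
      simpa using this
    -- pb ≤ pa + 1 and ub ≤ ua + 1, so with modularity: trichotomy
    have h3cases : (P ∩ A).ncard = (P ∩ B).ncard ∨ (P ∩ B).ncard = (P ∩ A).ncard + 1 ∨
        (P ∩ A).ncard = (P ∩ B).ncard + 1 := by omega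
    rcases h3cases with hc | hc | hc
    · -- 2a : P is a smaller P-set
      have hpsetP : IsPSet G A B P := by
        refine ⟨hc, Or.inr ⟨(u, v), ⟨⟨huA, fun h => huW h.2⟩, ⟨hvP, hvB⟩, hf⟩, ?_⟩⟩
        rintro ⟨a, b⟩ ⟨⟨haA, haP⟩, ⟨hbP, hbB⟩, hab⟩
        obtain ⟨h1, h2⟩ := hPcl2 a b hab hbP hbB haP
        simp [h1, h2]
      have hss : P ⊂ X := ⟨Set.inter_subset_left, fun hsub => huW (hsub huX).2⟩
      have := Set.ncard_lt_ncard hss (Set.toFinite _)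
      have := hmin P hpsetP
      omega
    · -- 2b : every PM contains f
      apply forced_edge_contra hG (hdeg u) (d := v)
      intro M hM
      obtain ⟨σ, hσ1, hσ2⟩ := exists_partner M hM
      have hσσ := partner_invol hσ1 hσ2
      have hσG : ∀ z, G.Adj z (σ z) := fun z => M.adj_sub (hσ1 z)
      have hF1P := count_F1 hbip hσG hσσ P
      have hne : {b ∈ P ∩ B | σ b ∉ P}.Nonempty := by
        apply Set.nonempty_of_ncard_ne_zero
        omega
      obtain ⟨b, hb⟩ := hne
      have hbv : b = v := (hinP_sub hσG) hb
      subst hbv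
      obtain ⟨⟨hbP, hbB⟩, hbσ⟩ := hb
      have := (hPcl2 (σ b) b (hσG b).symm hbP hbB hbσ).1
      exact this ▸ (hσ1 b).symm
    · -- 2c : every PM contains e0
      have hub : (U ∩ B).ncard = (U ∩ A).ncard + 1 := by omega
      apply forced_edge_contra hG (hdeg x0) (d := y0)
      intro M hM
      obtain ⟨σ, hσ1, hσ2⟩ := exists_partner M hM
      have hσσ := partner_invol hσ1 hσ2
      have hσG : ∀ z, G.Adj z (σ z) := fun z => M.adj_sub (hσ1 z)
      have hF1U := count_F1 hbip hσG hσσ U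
      have hne : {b ∈ U ∩ B | σ b ∉ U}.Nonempty := by
        apply Set.nonempty_of_ncard_ne_zero
        omega
      obtain ⟨b, hb⟩ := hne
      have hby0 : b = y0 := (hinU_sub hσG) hb
      subst hby0
      obtain ⟨⟨hbU, hbB⟩, hbσ⟩ := hb
      have := (hUcl (σ b) b (hσG b).symm hbU hbB hbσ).1
      exact this ▸ (hσ1 b).symm

lemma bip_swap (hbip : IsBipartition G A B) : IsBipartition G B A := by
  refine ⟨?_, ?_, ?_⟩
  · rw [Set.union_comm]; exact hbip.1
  · rw [Set.inter_comm]; exact hbip.2.1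
  · intro a b hab
    rcases hbip.2.2 a b hab with h | h
    · exact Or.inr h
    · exact Or.inl h

lemma isPSet_swap_mp {Y : Set V} (h : IsPSet G A B Y) : IsPSet G B A Y := by
  obtain ⟨hbal, hd⟩ := h
  refine ⟨hbal.symm, ?_⟩
  rcases hd with ⟨⟨a, b⟩, ⟨h1, h2, h3⟩, hu⟩ | ⟨⟨a, b⟩, ⟨h1, h2, h3⟩, hu⟩
  · refine Or.inr ⟨(b, a), ⟨h2, h1, h3.symm⟩, ?_⟩
    rintro ⟨c, d⟩ ⟨hc, hd', hcd⟩
    have := hu (d, c) ⟨hd', hc, hcd.symm⟩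
    rw [Prod.ext_iff] at this ⊢
    exact ⟨this.2, this.1⟩
  · refine Or.inl ⟨(b, a), ⟨h2, h1, h3.symm⟩, ?_⟩
    rintro ⟨c, d⟩ ⟨hc, hd', hcd⟩
    have := hu (d, c) ⟨hd', hc, hcd.symm⟩
    rw [Prod.ext_iff] at this ⊢
    exact ⟨this.2, this.1⟩

lemma pipeline (hG : MatchingCovered G) (hbip : IsBipartition G A B)
    (hdeg : ∀ z : V, 3 ≤ degN G z)
    (X : Set V) (hbalX : (X ∩ A).ncard = (X ∩ B).ncard)
    (hmin : ∀ Y : Set V, IsPSet G A B Y → X.ncard ≤ Y.ncard)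
    {x0 y0 : V} (hx0A : x0 ∈ A) (hx0X : x0 ∉ X) (hy0X : y0 ∈ X) (hy0B : y0 ∈ B)
    (he0 : G.Adj x0 y0)
    (hXcl : ∀ a b, G.Adj a b → b ∈ X → b ∈ B → a ∉ X → a = x0 ∧ b = y0)
    {u v : V} (huA : u ∈ A) (hvB : v ∈ B) (huX : u ∈ X) (hvX : v ∈ X) (hf : G.Adj u v) :
    MatchingCovered (G.deleteEdges {s(u, v)}) := by
  classical
  refine ⟨conn_del hG hbip huA hvB hf (hdeg u), hG.2.1, ?_⟩
  intro e he
  by_contra hno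
  revert he hno
  induction e using Sym2.ind with
  | _ x y =>
    intro he hno
    push_neg at hno
    have hxyadj : (G.deleteEdges {s(u, v)}).Adj x y := (SimpleGraph.mem_edgeSet _).mp he
    rw [SimpleGraph.deleteEdges_adj] at hxyadj
    obtain ⟨hxyG, hxyne'⟩ := hxyadj
    have hxyne : s(x, y) ≠ s(u, v) := by simpa using hxyne'
    have hforce : ∀ M : G.Subgraph, M.IsPerfectMatching → M.Adj x y → M.Adj u v := by
      intro M hM hMxy
      by_contra hMuv
      have hadjsub : ∀ {p q : V}, M.Adj p q → (G.deleteEdges {s(u, v)}).Adj p q := by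
        intro p q h
        rw [SimpleGraph.deleteEdges_adj]
        refine ⟨M.adj_sub h, ?_⟩
        rw [Set.mem_singleton_iff, Sym2.eq_iff]
        rintro (⟨rfl, rfl⟩ | ⟨rfl, rfl⟩)
        · exact hMuv h
        · exact hMuv h.symm
      set M' : (G.deleteEdges {s(u, v)}).Subgraph :=
        { verts := M.verts
          Adj := M.Adj
          adj_sub := hadjsub
          edge_vert := fun h => M.edge_vert h
          symm := M.symm } with hM'
      have hM'PM : M'.IsPerfectMatching := by
        constructor
        · intro z hz
          exact hM.1 hz
        · intro z
          exact hM.2 z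
      exact hno M' hM'PM ((SimpleGraph.Subgraph.mem_edgeSet).mpr hMxy)
    rcases hbip.2.2 x y hxyG with ⟨hxA, hyB⟩ | ⟨hxB, hyA⟩
    · obtain ⟨W, hbalW, hvW, huW, hWcl⟩ :=
        lemC hG hbip huA hvB hf (hdeg u) hxA hyB hxyG hxyne hforce
      exact coreL2 hG hbip hdeg X hbalX hmin hx0A hx0X hy0X hy0B he0 hXcl
        huA hvB huX hvX hf W hbalW hvW huW hWcl
    · have hxyne2 : s(y, x) ≠ s(u, v) := by
        rw [Sym2.eq_swap]
        exact hxyne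
      obtain ⟨W, hbalW, hvW, huW, hWcl⟩ :=
        lemC hG hbip huA hvB hf (hdeg u) hyA hxB hxyG.symm hxyne2
          (fun M hM h => hforce M hM h.symm)
      exact coreL2 hG hbip hdeg X hbalX hmin hx0A hx0X hy0X hy0B he0 hXcl
        huA hvB huX hvX hf W hbalW hvW huW hWcl

lemma main_core (hG : MatchingCovered G) (hbip : IsBipartition G A B)
    (hdeg : ∀ z : V, 3 ≤ degN G z)
    (X : Set V) (hX : IsPSet G A B X)
    (hmin : ∀ Y : Set V, IsPSet G A B Y → X.ncard ≤ Y.ncard)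
    {u v : V} (huA : u ∈ A) (hvB : v ∈ B) (huX : u ∈ X) (hvX : v ∈ X) (hf : G.Adj u v) :
    MatchingCovered (G.deleteEdges {s(u, v)}) := by
  obtain ⟨hbalX, hd⟩ := hX
  rcases hd with ⟨⟨a0, b0⟩, ⟨h1, h2, h3⟩, hu⟩ | ⟨⟨x0, y0⟩, ⟨h1, h2, h3⟩, hu⟩
  · -- type 1: unique edge from X ∩ A to B \ X; work in swapped bipartition
    have hswap : MatchingCovered (G.deleteEdges {s(v, u)}) := by
      refine pipeline (A := B) (B := A) hG (bip_swap hbip) hdeg X hbalX.symm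
        (fun Y hY => hmin Y (isPSet_swap_mp hY))
        (x0 := b0) (y0 := a0) h2.1 h2.2 h1.1 h1.2 h3.symm ?_ hvB huA hvX huX hf.symm
      intro p q hpq hqX hqA hpX
      have hpB : p ∈ B := by
        rcases hbip.2.2 p q hpq with ⟨hp, hq⟩ | ⟨hp, _⟩
        · exact absurd hqA (fun h => bip_notAB hbip h hq)
        · exact hp
      have := hu (q, p) ⟨⟨hqX, hqA⟩, ⟨hpB, hpX⟩, hpq.symm⟩
      rw [Prod.ext_iff] at this
      exact ⟨this.2, this.1⟩
    rwa [show s(v, u) = s(u, v) from Sym2.eq_swap] at hswap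
  · -- type 2: direct
    refine pipeline hG hbip hdeg X hbalX hmin (x0 := x0) (y0 := y0)
      h1.1 h1.2 h2.1 h2.2 h3 ?_ huA hvB huX hvX hf
    intro p q hpq hqX hqB hpX
    have hpA : p ∈ A := bip_sideA hbip hpq hqB
    have := hu (p, q) ⟨⟨hpA, hpX⟩, ⟨hqX, hqB⟩, hpq⟩
    rw [Prod.ext_iff] at this
    exact this

end RemovableProof

theorem stmt11 {V : Type u} [Finite V] (G : SimpleGraph V) (A B : Set V)
    (hG : MatchingCovered G) (hbip : IsBipartition G A B)
    (hcard : 4 ≤ Nat.card V) (hdeg : ∀ v : V, 3 ≤ degN G v)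
    (X : Set V) (hX : IsPSet G A B X)
    (hmin : ∀ Y : Set V, IsPSet G A B Y → X.ncard ≤ Y.ncard) :
    ∀ a ∈ X, ∀ b ∈ X, G.Adj a b → Removable G s(a, b) := by
  intro a ha b hb hadj
  refine ⟨(G.mem_edgeSet).mpr hadj, ?_⟩
  rcases hbip.2.2 a b hadj with ⟨haA, hbB⟩ | ⟨haB, hbA⟩
  · exact main_core hG hbip hdeg X hX hmin haA hbB ha hb hadj
  · exact main_core (A := B) (B := A) hG (bip_swap hbip) hdeg X (isPSet_swap_mp hX)
      (fun Y hY => hmin Y (isPSet_swap_mp hY)) haB hbA ha hb hadj
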